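/- Let B be the closed unit ball of ℝ² (Euclidean norm), x = (1, 0) and v = (0, 1). Then for every w = (w₁, w₂) ∈ ℝ², one has dist((1,0) + h·(0,1) + h²·w, B)/h² → 0 as h → 0⁺ if and only if w₁ ≤ −1/2. In other words, the second-order adjacent subset T^{♭(2)}_B((1,0), (0,1)) equals { (w₁, w₂) ∈ ℝ² : w₁ ≤ −1/2 }. -/

import Mathlib

open Filter Metric

private lemma norm_sub_one_le_infDist_closedBall {E : Type*} [NormedAddCommGroup E]
    [NormedSpace ℝ E] (y : E) : ‖y‖ - 1 ≤ infDist y (closedBall (0:E) 1) := by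
  by_contra hlt
  push_neg at hlt
  obtain ⟨z, hz, hd⟩ := (infDist_lt_iff ⟨0, by simp⟩).mp hlt
  have hz1 : ‖z‖ ≤ 1 := by simpa using hz
  have : ‖y‖ - ‖z‖ ≤ dist y z := by
    simpa [dist_eq_norm] using norm_sub_norm_le y z
  linarith

private lemma infDist_closedBall_le {E : Type*} [NormedAddCommGroup E]
    [NormedSpace ℝ E] (y : E) : infDist y (closedBall (0:E) 1) ≤ max (‖y‖ - 1) 0 := by
  rcases le_or_gt ‖y‖ 1 with hy | hy
  · have : y ∈ closedBall (0:E) 1 := by simpa using hy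
    simp [infDist_zero_of_mem this]
  · have hy0 : ‖y‖ ≠ 0 := by positivity
    calc infDist y (closedBall (0:E) 1) ≤ dist y (‖y‖⁻¹ • y) := by
          refine infDist_le_dist_of_mem ?_
          simp [norm_smul, abs_of_nonneg (by positivity : (0:ℝ) ≤ ‖y‖⁻¹),
            inv_mul_cancel₀ hy0]
      _ = ‖y‖ - 1 := by
          rw [dist_eq_norm]
          have h1 : y - ‖y‖⁻¹ • y = (1 - ‖y‖⁻¹) • y := by module
          have h2 : ‖y‖⁻¹ ≤ 1 := by
            rw [inv_le_one_iff₀]; right; linarith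
          rw [h1, norm_smul, Real.norm_eq_abs, abs_of_nonneg (by linarith), sub_mul,
            one_mul, inv_mul_cancel₀ hy0]
      _ ≤ max (‖y‖ - 1) 0 := le_max_left _ _

private lemma normsq_point (w : EuclideanSpace ℝ (Fin 2)) (h : ℝ) :
    ‖((WithLp.equiv 2 (Fin 2 → ℝ)).symm ![1, 0] +
        h • (WithLp.equiv 2 (Fin 2 → ℝ)).symm ![0, 1] + h ^ 2 • w)‖ ^ 2
      = (1 + h ^ 2 * w 0) ^ 2 + (h + h ^ 2 * w 1) ^ 2 := by
  rw [← Real.sqrt_sq (norm_nonneg _), EuclideanSpace.norm_eq]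
  simp [Fin.sum_univ_two, WithLp.equiv_symm_apply, PiLp.toLp_apply]
  exact Real.sq_sqrt (by positivity)

theorem secondOrderAdjacent_closedBall_at_one_zero (w : EuclideanSpace ℝ (Fin 2)) :
    Tendsto
      (fun h : ℝ =>
        infDist
          ((WithLp.equiv 2 (Fin 2 → ℝ)).symm ![1, 0] +
            h • (WithLp.equiv 2 (Fin 2 → ℝ)).symm ![0, 1] + h ^ 2 • w)
          (Metric.closedBall (0 : EuclideanSpace ℝ (Fin 2)) 1) / h ^ 2)
      (nhdsWithin 0 (Set.Ioi 0)) (nhds 0) ↔ w 0 ≤ -(1 / 2) := by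
  set a := w 0 with ha
  set b := w 1 with hb
  set p : ℝ → EuclideanSpace ℝ (Fin 2) := fun h =>
    (WithLp.equiv 2 (Fin 2 → ℝ)).symm ![1, 0] +
      h • (WithLp.equiv 2 (Fin 2 → ℝ)).symm ![0, 1] + h ^ 2 • w with hp
  set f : ℝ → ℝ := fun h =>
    infDist (p h) (Metric.closedBall (0 : EuclideanSpace ℝ (Fin 2)) 1) / h ^ 2 with hf
  have hNsq : ∀ h : ℝ, ‖p h‖ ^ 2 = (1 + h ^ 2 * a) ^ 2 + (h + h ^ 2 * b) ^ 2 :=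
    fun h => normsq_point w h
  constructor
  · intro htend
    by_contra hagt
    push_neg at hagt
    set ε : ℝ := 2 * a + 1 with hε
    have hεpos : 0 < ε := by rw [hε]; linarith
    -- eventually f h ≥ ε/6
    have hδpos : 0 < min 1 (min (1/ε) (ε / (4 * (|b| + 1)))) := by positivity
    have hev : ∀ᶠ h in nhdsWithin (0:ℝ) (Set.Ioi 0), ε / 6 ≤ f h := by
      filter_upwards [Ioo_mem_nhdsGT_of_mem (Set.left_mem_Ico.mpr hδpos)] with h hh
      obtain ⟨hh0, hh1⟩ := hh
      have h1 : h < 1 := lt_of_lt_of_le hh1 (min_le_left _ _)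
      have h2 : h < 1/ε := lt_of_lt_of_le hh1 ((min_le_right _ _).trans (min_le_left _ _))
      have h3 : h < ε / (4 * (|b| + 1)) :=
        lt_of_lt_of_le hh1 ((min_le_right _ _).trans (min_le_right _ _))
      have hbnn : (0:ℝ) ≤ |b| := abs_nonneg b
      have h2' : h * ε < 1 := by
        rw [lt_div_iff₀ hεpos] at h2; linarith
      have h3' : 2 * h * |b| ≤ ε / 2 := by
        rw [lt_div_iff₀ (by positivity)] at h3
        nlinarith
      set t : ℝ := h ^ 2 * ε / 2 with hts
      have htnn : 0 ≤ t := by positivity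
      have ht3 : t ≤ 3 := by nlinarith
      have hNlb : 1 + t ≤ ‖p h‖ ^ 2 := by
        rw [hNsq h, hts, hε]
        have e1 := mul_le_mul_of_nonneg_left h3' (sq_nonneg h)
        have e2 := mul_le_mul_of_nonneg_left (neg_le_abs b)
          (by positivity : (0:ℝ) ≤ 2 * h ^ 3)
        nlinarith [sq_nonneg (h ^ 2 * a), sq_nonneg (h ^ 2 * b)]
      have hN1 : 1 + t/3 ≤ ‖p h‖ := by
        nlinarith [norm_nonneg (p h)]
      have hlow : t/3 ≤ infDist (p h) (closedBall (0 : EuclideanSpace ℝ (Fin 2)) 1) := by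
        have := norm_sub_one_le_infDist_closedBall (p h)
        linarith
      rw [hf]
      simp only
      rw [le_div_iff₀ (by positivity)]
      calc ε / 6 * h ^ 2 = t / 3 := by rw [hts]; ring
        _ ≤ _ := hlow
    have hlt : ∀ᶠ h in nhdsWithin (0:ℝ) (Set.Ioi 0), f h < ε / 6 :=
      htend (Iio_mem_nhds (by positivity : (0:ℝ) < ε / 6))
    obtain ⟨h, hge, hlt'⟩ := (hev.and hlt).exists
    linarith
  · intro hale
    have hC : (0:ℝ) ≤ a ^ 2 + b ^ 2 := by positivity
    have hub : ∀ᶠ h in nhdsWithin (0:ℝ) (Set.Ioi 0),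
        f h ≤ 2 * h * |b| + h ^ 2 * (a ^ 2 + b ^ 2) := by
      filter_upwards [self_mem_nhdsWithin] with h (hh0 : 0 < h)
      have hbnd : infDist (p h) (closedBall (0 : EuclideanSpace ℝ (Fin 2)) 1)
          ≤ 2 * h ^ 3 * |b| + h ^ 4 * (a ^ 2 + b ^ 2) := by
        refine (infDist_closedBall_le (p h)).trans ?_
        rw [max_le_iff]
        constructor
        · set N := ‖p h‖ with hN
          have hNnn : 0 ≤ N := norm_nonneg _
          have hNsq' : N ^ 2 = (1 + h ^ 2 * a) ^ 2 + (h + h ^ 2 * b) ^ 2 := hNsq h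
          have e2 := mul_le_mul_of_nonneg_left (le_abs_self b)
            (by positivity : (0:ℝ) ≤ 2 * h ^ 3)
          have e3 : h ^ 2 * (2 * a + 1) ≤ 0 :=
            mul_nonpos_of_nonneg_of_nonpos (sq_nonneg h) (by linarith)
          rcases le_or_gt N 1 with hN1 | hN1
          · have : (0:ℝ) ≤ 2 * h ^ 3 * |b| + h ^ 4 * (a ^ 2 + b ^ 2) := by positivity
            linarith
          · nlinarith [sq_nonneg (N - 1)]
        · positivity
      rw [hf]
      simp only
      rw [div_le_iff₀ (by positivity)]
      calc infDist (p h) (closedBall (0 : EuclideanSpace ℝ (Fin 2)) 1)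
          ≤ 2 * h ^ 3 * |b| + h ^ 4 * (a ^ 2 + b ^ 2) := hbnd
        _ = (2 * h * |b| + h ^ 2 * (a ^ 2 + b ^ 2)) * h ^ 2 := by ring
    have hlb : ∀ᶠ h in nhdsWithin (0:ℝ) (Set.Ioi 0), 0 ≤ f h := by
      filter_upwards with h
      exact div_nonneg infDist_nonneg (sq_nonneg h)
    have hgt : Tendsto (fun h : ℝ => 2 * h * |b| + h ^ 2 * (a ^ 2 + b ^ 2))
        (nhdsWithin (0:ℝ) (Set.Ioi 0)) (nhds 0) := by
      have hc : Continuous fun h : ℝ => 2 * h * |b| + h ^ 2 * (a ^ 2 + b ^ 2) :=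
        ((continuous_const.mul continuous_id).mul continuous_const).add
          ((continuous_pow 2).mul continuous_const)
      have := hc.tendsto 0
      simp only [mul_zero, zero_mul, ne_eq, OfNat.ofNat_ne_zero, not_false_eq_true,
        zero_pow, add_zero] at this
      exact this.mono_left nhdsWithin_le_nhds
    exact squeeze_zero' hlb hub hgt
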